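/- Let r_0, r_1, ..., r_n be a sequence of non-negative real numbers and C ≥ 0 a constant such that (1/2) r_{i-1} + (1/2) r_{i+1} ≤ r_i + C for all 0 < i < n. Then for any index p and any l, k with 0 ≤ l ≤ p and 0 ≤ k ≤ n - p and k + l > 0, one has (k/(k+l)) r_{p-l} + (l/(k+l)) r_{p+k} ≤ r_p + k·l·C. -/

import Mathlib

theorem stmt_3 (n : ℕ) (r : ℕ → ℝ) (C : ℝ) (hC : 0 ≤ C)
    (hnn : ∀ i, i ≤ n → 0 ≤ r i)
    (hconc : ∀ i, 0 < i → i < n → (1/2) * r (i-1) + (1/2) * r (i+1) ≤ r i + C) :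
    ∀ p l k : ℕ, l ≤ p → p + k ≤ n → 0 < k + l →
      ((k:ℝ) / (k + l)) * r (p - l) + ((l:ℝ) / (k + l)) * r (p + k) ≤
        r p + (k:ℝ) * (l:ℝ) * C := by
  intro p l k hl hpk hkl
  rcases Nat.eq_zero_or_pos l with hl0 | hlpos
  · subst hl0
    have hk : (0:ℝ) < k := by exact_mod_cast (by omega : 0 < k)
    simp only [Nat.sub_zero, Nat.cast_zero, add_zero, zero_div, zero_mul, mul_zero]
    rw [div_self (ne_of_gt hk)]
    simp
  rcases Nat.eq_zero_or_pos k with hk0 | hkpos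
  · subst hk0
    have hlp : (0:ℝ) < l := by exact_mod_cast hlpos
    simp only [Nat.cast_zero, zero_add, zero_div, zero_mul, add_zero, zero_mul]
    rw [div_self (ne_of_gt hlp)]
    simp
  -- main case
  set g : ℕ → ℝ := fun i => r i - C * (i:ℝ)^2 with hg
  set d : ℕ → ℝ := fun i => g (i+1) - g i with hd
  have hstep : ∀ m, m + 1 < n → d (m+1) ≤ d m := by
    intro m hm
    have h := hconc (m+1) (Nat.succ_pos m) hm
    simp only [Nat.add_sub_cancel] at h
    simp only [hd, hg]
    push_cast
    nlinarith [h]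
  have hmono : ∀ i j : ℕ, i ≤ j → j < n → d j ≤ d i := by
    intro i j hij hjn
    induction j, hij using Nat.le_induction with
    | base => exact le_rfl
    | succ m hm ih =>
      exact le_trans (hstep m hjn) (ih (by omega))
  have hpn : p < n := by omega
  have hdp : d p ≤ d (p-1) := hmono (p-1) p (by omega) hpn
  have hlow : (l:ℝ) * d (p-1) ≤ g p - g (p-l) := by
    have htel : g p - g (p-l) = ∑ j ∈ Finset.range l, d (p - l + j) := by
      have h := Finset.sum_range_sub (fun j => g (p - l + j)) l
      have e1 : g p = g (p - l + l) := by congr 1; omega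
      have e2 : g (p - l) = g (p - l + 0) := by norm_num
      rw [e1, e2, ← h]
      exact Finset.sum_congr rfl fun j _ => by simp [hd, Nat.add_assoc]
    rw [htel]
    have : ∀ j ∈ Finset.range l, d (p-1) ≤ d (p - l + j) := by
      intro j hj
      simp only [Finset.mem_range] at hj
      exact hmono (p - l + j) (p-1) (by omega) (by omega)
    calc (l:ℝ) * d (p-1) = ∑ _j ∈ Finset.range l, d (p-1) := by
          simp [mul_comm]
      _ ≤ ∑ j ∈ Finset.range l, d (p - l + j) := Finset.sum_le_sum this
  have hhigh : g (p+k) - g p ≤ (k:ℝ) * d p := by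
    have htel : g (p+k) - g p = ∑ j ∈ Finset.range k, d (p + j) := by
      have h := Finset.sum_range_sub (fun j => g (p + j)) k
      have e2 : g p = g (p + 0) := by norm_num
      rw [e2, ← h]
      exact Finset.sum_congr rfl fun j _ => by simp [hd, Nat.add_assoc]
    rw [htel]
    have : ∀ j ∈ Finset.range k, d (p + j) ≤ d p := by
      intro j hj
      simp only [Finset.mem_range] at hj
      exact hmono p (p + j) (by omega) (by omega)
    calc ∑ j ∈ Finset.range k, d (p + j) ≤ ∑ _j ∈ Finset.range k, d p :=
          Finset.sum_le_sum this
      _ = (k:ℝ) * d p := by simp [mul_comm]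
  have hkR : (0:ℝ) < k := by exact_mod_cast hkpos
  have hlR : (0:ℝ) < l := by exact_mod_cast hlpos
  have hkey : (k:ℝ) * g (p-l) + (l:ℝ) * g (p+k) ≤ ((k:ℝ)+(l:ℝ)) * g p := by
    have h1 : (l:ℝ) * (g (p+k) - g p) ≤ (l:ℝ) * ((k:ℝ) * d p) := by
      have := mul_le_mul_of_nonneg_left hhigh (le_of_lt hlR)
      linarith
    have h2 : (k:ℝ) * ((l:ℝ) * d (p-1)) ≤ (k:ℝ) * (g p - g (p-l)) := by
      have := mul_le_mul_of_nonneg_left hlow (le_of_lt hkR)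
      linarith
    have h3 : (l:ℝ) * ((k:ℝ) * d p) ≤ (k:ℝ) * ((l:ℝ) * d (p-1)) := by
      have := mul_le_mul_of_nonneg_left hdp (le_of_lt (mul_pos hkR hlR))
      nlinarith
    nlinarith
  have hcast1 : ((p - l : ℕ) : ℝ) = (p:ℝ) - (l:ℝ) := by
    push_cast [Nat.cast_sub hl]; ring
  have hcast2 : ((p + k : ℕ) : ℝ) = (p:ℝ) + (k:ℝ) := by push_cast; ring
  have hkey2 : (k:ℝ) * r (p-l) + (l:ℝ) * r (p+k) ≤
      ((k:ℝ)+(l:ℝ)) * r p + ((k:ℝ)+(l:ℝ)) * ((k:ℝ) * (l:ℝ) * C) := by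
    simp only [hg, hcast1, hcast2] at hkey
    nlinarith [hkey]
  have hs : (0:ℝ) < (k:ℝ) + (l:ℝ) := by positivity
  rw [div_mul_eq_mul_div, div_mul_eq_mul_div, ← add_div, div_le_iff₀ hs]
  nlinarith [hkey2]
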